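/- arXiv:1812.06643 — 3 statements merged into one kernel-verified Lean document; each statement's English description precedes it below -/
import Mathlib

section
/- For real a with |a| < 1, ∑_{j=1}^∞ (-1)^{j+1}/((2j-1) + (-1)^j a) = (π/4)·(1 + tan(πa/4))/(1 - tan(πa/4)). -/
open Real Filter Topology

lemma bnei {b : ℝ} (hb0 : 0 < b) (hb1 : b < 1/2) (n : ℤ) : b ≠ (n:ℝ) := by
  rcases le_or_gt n 0 with h|h
  · have : (n:ℝ) ≤ 0 := by exact_mod_cast h
    intro he; linarith
  · have : (1:ℝ) ≤ (n:ℝ) := by exact_mod_cast h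
    intro he; linarith

lemma coeff_integral {b : ℝ} (hb0 : 0 < b) (hb1 : b < 1/2) (n : ℤ) :
    ∫ x in (-π)..π, Complex.exp (Complex.I * (-n) * x) * (Real.cos (b * x) : ℂ)
      = ((-1:ℝ)^n * Real.sin (π*b) * (2*b) / (b^2 - (n:ℝ)^2) : ℝ) := by
  have h1 : ((b:ℂ) - n) ≠ 0 := by
    rw [sub_ne_zero]; exact_mod_cast bnei hb0 hb1 n
  have h2 : ((b:ℂ) + n) ≠ 0 := by
    have hne := bnei hb0 hb1 (-n)
    intro h
    apply hne
    have : (b:ℂ) = ((-n : ℤ) : ℂ) := by push_cast; linear_combination h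
    exact_mod_cast this
  have hc1 : Complex.I * ((b:ℂ) - n) ≠ 0 := mul_ne_zero Complex.I_ne_zero h1
  have hc2 : -Complex.I * ((b:ℂ) + n) ≠ 0 := mul_ne_zero (neg_ne_zero.mpr Complex.I_ne_zero) h2
  have key : ∀ x : ℝ, Complex.exp (Complex.I * (-n) * x) * (Real.cos (b * x) : ℂ)
      = Complex.exp ((Complex.I * ((b:ℂ) - n)) * x) / 2
        + Complex.exp ((-Complex.I * ((b:ℂ) + n)) * x) / 2 := by
    intro x
    rw [Complex.ofReal_cos]
    push_cast
    rw [Complex.cos]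
    rw [show Complex.I * (↑b - ↑n) * ↑x = (Complex.I * (-↑n) * ↑x) + (↑b * ↑x * Complex.I) by push_cast; ring,
        show -Complex.I * (↑b + ↑n) * ↑x = (Complex.I * (-↑n) * ↑x) + (-(↑b * ↑x) * Complex.I) by push_cast; ring,
        Complex.exp_add, Complex.exp_add]
    ring
  rw [intervalIntegral.integral_congr (g := fun x : ℝ =>
      Complex.exp ((Complex.I * ((b:ℂ) - n)) * x) / 2
        + Complex.exp ((-Complex.I * ((b:ℂ) + n)) * x) / 2) (fun x _ => key x)]
  rw [intervalIntegral.integral_add, intervalIntegral.integral_div, intervalIntegral.integral_div,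
    integral_exp_mul_complex hc1, integral_exp_mul_complex hc2]
  · set u : ℂ := Complex.exp (Complex.I * b * π) with hu
    set v : ℂ := Complex.exp (-(Complex.I * b * π)) with hv
    set w : ℂ := (-1 : ℂ)^n with hwdef
    have hw : Complex.exp (Complex.I * n * π) = w := by
      rw [show Complex.I * (n:ℂ) * π = (n:ℤ) * ((π:ℂ) * Complex.I) by push_cast; ring,
        Complex.exp_int_mul, Complex.exp_pi_mul_I]
    have hw' : Complex.exp (-(Complex.I * n * π)) = w⁻¹ := by
      rw [Complex.exp_neg, hw]
    have hwinv : w⁻¹ = w := by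
      rw [hwdef, ← zpow_neg]
      rcases Int.even_or_odd n with he|ho
      · rw [(by simpa using he.neg : Even (-n)).neg_one_zpow, he.neg_one_zpow]
      · rw [(by simpa using ho.neg : Odd (-n)).neg_one_zpow, ho.neg_one_zpow]
    have e1 : Complex.exp (Complex.I * ((b:ℂ) - n) * π) = u * w := by
      rw [show Complex.I * ((b:ℂ) - n) * π = (Complex.I * b * π) + (-(Complex.I * n * π)) by push_cast; ring,
        Complex.exp_add, hw', hwinv, hu]
    have e2 : Complex.exp (Complex.I * ((b:ℂ) - n) * (-(π : ℂ))) = v * w := by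
      rw [show Complex.I * ((b:ℂ) - n) * (-(π:ℂ)) = (-(Complex.I * b * π)) + (Complex.I * n * π) by push_cast; ring,
        Complex.exp_add, hw, hv]
    have e3 : Complex.exp (-Complex.I * ((b:ℂ) + n) * π) = v * w := by
      rw [show -Complex.I * ((b:ℂ) + n) * π = (-(Complex.I * b * π)) + (-(Complex.I * n * π)) by push_cast; ring,
        Complex.exp_add, hw', hwinv, hv]
    have e4 : Complex.exp (-Complex.I * ((b:ℂ) + n) * (-(π : ℂ))) = u * w := by
      rw [show -Complex.I * ((b:ℂ) + n) * (-(π:ℂ)) = (Complex.I * b * π) + (Complex.I * n * π) by push_cast; ring,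
        Complex.exp_add, hw, hu]
    have hsin : Complex.sin ((π:ℂ) * b) = (v - u) * Complex.I / 2 := by
      rw [Complex.sin,
        show -((π:ℂ)*b)*Complex.I = -(Complex.I*b*π) by ring,
        show ((π:ℂ)*b)*Complex.I = Complex.I*b*π by ring]
    push_cast [e1, e2, e3, e4]
    rw [hsin]
    have hbn : (b:ℂ)^2 - (n:ℂ)^2 ≠ 0 := by
      have : (b:ℂ)^2 - (n:ℂ)^2 = ((b:ℂ) - n) * ((b:ℂ) + n) := by ring
      rw [this]; exact mul_ne_zero h1 h2
    field_simp
    ring_nf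
    linear_combination (2*(b:ℂ)*(u-v)*((b:ℂ)^2-(n:ℂ)^2)*(-1:ℂ)^n) * Complex.I_mul_I + (2*(b:ℂ)*(u-v)*((b:ℂ)^2-(n:ℂ)^2)) * hwdef
  · exact ((Complex.continuous_exp.comp (continuous_const.mul Complex.continuous_ofReal)).div_const 2).intervalIntegrable _ _
  · exact ((Complex.continuous_exp.comp (continuous_const.mul Complex.continuous_ofReal)).div_const 2).intervalIntegrable _ _

lemma den_ne {b : ℝ} (hb0 : 0 < b) (hb1 : b < 1/2) (n : ℤ) : b^2 - (n:ℝ)^2 ≠ 0 := by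
  intro h
  have h1 := bnei hb0 hb1 n
  have h2 := bnei hb0 hb1 (-n)
  push_cast at h2
  have : (b - n) * (b + n) = 0 := by linarith [h]
  rcases mul_eq_zero.mp this with h'|h'
  · exact h1 (by linarith)
  · exact h2 (by linarith)

lemma summable_den {b : ℝ} (hb0 : 0 < b) (hb1 : b < 1/2) :
    Summable (fun n : ℤ => |b^2 - (n:ℝ)^2|⁻¹) := by
  have base : Summable (fun k : ℕ => |b^2 - (k:ℝ)^2|⁻¹) := by
    rw [← summable_nat_add_iff 1]
    have htarget : Summable (fun k : ℕ => (4/3) * (1/((k:ℝ)+1)^2)) := by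
      apply Summable.mul_left
      have := (summable_nat_add_iff (f := fun n : ℕ => 1/(n:ℝ)^2) 1).mpr
        (summable_one_div_nat_pow.mpr one_lt_two)
      simpa using this
    apply Summable.of_nonneg_of_le (fun k => by positivity) _ htarget
    intro k
    have hk1 : (1:ℝ) ≤ (k:ℝ)+1 := by exact_mod_cast Nat.one_le_iff_ne_zero.mpr (Nat.succ_ne_zero k)
    have h1 : b^2 - ((k:ℝ)+1)^2 ≤ -((3/4) * ((k:ℝ)+1)^2) := by nlinarith
    have h2 : (3/4) * ((k:ℝ)+1)^2 ≤ |b^2 - ((k:ℝ)+1)^2| := by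
      rw [abs_sub_comm]
      calc (3/4) * ((k:ℝ)+1)^2 ≤ ((k:ℝ)+1)^2 - b^2 := by nlinarith
        _ ≤ |((k:ℝ)+1)^2 - b^2| := le_abs_self _
    have h3 : (0:ℝ) < (3/4)*((k:ℝ)+1)^2 := by positivity
    have h4 : |b^2 - (((k+1:ℕ)):ℝ)^2|⁻¹ ≤ ((3/4)*((k:ℝ)+1)^2)⁻¹ := by
      apply inv_anti₀ h3
      push_cast
      exact h2
    calc |b^2 - (((k+1:ℕ)):ℝ)^2|⁻¹ ≤ ((3/4)*((k:ℝ)+1)^2)⁻¹ := h4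
      _ = (4/3)*(1/((k:ℝ)+1)^2) := by rw [mul_inv, one_div]; norm_num
  apply Summable.of_nat_of_neg <;> · push_cast; simpa using base

lemma cot_int_hasSum {b : ℝ} (hb0 : 0 < b) (hb1 : b < 1/2) :
    HasSum (fun n : ℤ => b / (b^2 - (n:ℝ)^2)) (π * Real.cos (π*b) / Real.sin (π*b)) := by
  haveI : Fact (0 < 2*π) := ⟨by positivity⟩
  have hπ : (0:ℝ) < π := Real.pi_pos
  have hπc : (π:ℂ) ≠ 0 := by exact_mod_cast hπ.ne'
  have hsinpos : 0 < Real.sin (π*b) := by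
    apply Real.sin_pos_of_pos_of_lt_pi (by positivity)
    nlinarith
  have hcont : Continuous fun x : AddCircle (2*π) => (Real.cos (b * ‖x‖) : ℂ) :=
    Complex.continuous_ofReal.comp (Real.continuous_cos.comp (continuous_const.mul continuous_norm))
  set f : C(AddCircle (2*π), ℂ) := ⟨fun x => (Real.cos (b * ‖x‖) : ℂ), hcont⟩ with hfdef
  have hval : ∀ x : ℝ, |x| ≤ π → f (x : AddCircle (2*π)) = (Real.cos (b * x) : ℂ) := by
    intro x hx
    have hnorm : ‖(x : AddCircle (2*π))‖ = |x| := by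
      rw [AddCircle.norm_coe_eq_abs_iff (2*π) (by positivity)]
      rw [abs_of_pos (by positivity : (0:ℝ) < 2*π)]
      linarith
    show (Real.cos (b * ‖(x : AddCircle (2*π))‖) : ℂ) = _
    rw [hnorm]
    norm_cast
    rw [← Real.cos_abs (b*x), abs_mul, abs_of_pos hb0]
  set c : ℤ → ℝ := fun n => (-1:ℝ)^n * Real.sin (π*b) * b / (π * (b^2 - (n:ℝ)^2)) with hcdef
  have hcoeff : ∀ n : ℤ, fourierCoeff (⇑f) n = (c n : ℂ) := by
    intro n
    rw [fourierCoeff_eq_intervalIntegral (⇑f) n (-π)]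
    have hend : -π + 2*π = π := by ring
    rw [hend]
    have hint : ∀ x ∈ Set.uIcc (-π) π,
        (fourier (-n) (x : AddCircle (2*π))) • f (x : AddCircle (2*π))
          = Complex.exp (Complex.I * (-n) * x) * (Real.cos (b * x) : ℂ) := by
      intro x hx
      rw [Set.uIcc_of_le (by linarith : -π ≤ π)] at hx
      have hxabs : |x| ≤ π := abs_le.mpr ⟨hx.1, hx.2⟩
      rw [smul_eq_mul, hval x hxabs, fourier_coe_apply]
      congr 2
      push_cast
      field_simp
    rw [intervalIntegral.integral_congr hint, coeff_integral hb0 hb1 n]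
    rw [Complex.real_smul]
    push_cast
    rw [hcdef]
    push_cast
    have hd : ((b:ℂ)^2 - (n:ℂ)^2) ≠ 0 := by
      intro h; apply den_ne hb0 hb1 n; exact_mod_cast h
    field_simp
  have hsum : Summable (fourierCoeff (⇑f)) := by
    have hc : Summable c := by
      apply Summable.of_norm
      refine Summable.of_nonneg_of_le (fun n => norm_nonneg (c n)) (fun n => ?_)
        ((summable_den hb0 hb1).mul_left (Real.sin (π*b) * b / π))
      have habs : |c n| = Real.sin (π*b) * b / (π * |b^2-(n:ℝ)^2|) := by
        rw [hcdef]
        simp only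
        rw [abs_div, abs_mul, abs_mul, abs_mul, abs_of_pos hπ, abs_of_pos hb0,
          abs_of_nonneg hsinpos.le,
          show |(-1:ℝ)^n| = 1 from by
            rcases Int.even_or_odd n with he|ho
            · rw [he.neg_one_zpow, abs_one]
            · rw [ho.neg_one_zpow, abs_neg, abs_one], one_mul]
      rw [Real.norm_eq_abs, habs]
      rw [div_eq_mul_inv, mul_inv, div_eq_mul_inv]
      exact le_of_eq (by ring)
    rw [funext hcoeff]
    exact Complex.summable_ofReal.mpr hc
  have heval := has_pointwise_sum_fourier_series_of_summable hsum ((π : ℝ) : AddCircle (2*π))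
  have hfπ : f ((π:ℝ) : AddCircle (2*π)) = (Real.cos (b * π) : ℂ) := hval π (by rw [abs_of_pos hπ])
  have hfour : ∀ n : ℤ, fourier n (((π:ℝ)) : AddCircle (2*π)) = ((-1:ℂ))^n := by
    intro n
    rw [fourier_coe_apply]
    push_cast
    rw [show 2 * (π:ℂ) * Complex.I * n * π / (2*π) = n * (π * Complex.I) by
      field_simp]
    rw [Complex.exp_int_mul, Complex.exp_pi_mul_I]
  rw [hfπ] at heval
  simp only [hcoeff, hfour, smul_eq_mul] at heval
  have heval2 : HasSum (fun n : ℤ => Real.sin (π*b) * b / (π * (b^2 - (n:ℝ)^2))) (Real.cos (b*π)) := by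
    rw [← Complex.hasSum_ofReal]
    convert heval using 2 with n
    push_cast
    rw [hcdef]
    push_cast
    have hw : ((-1:ℂ))^n * ((-1:ℂ))^n = 1 := by
      rw [← zpow_add₀ (by norm_num : (-1:ℂ) ≠ 0)]
      exact Even.neg_one_zpow ⟨n, by ring⟩
    have hd : ((b:ℂ)^2 - (n:ℂ)^2) ≠ 0 := by
      intro h; apply den_ne hb0 hb1 n; exact_mod_cast h
    field_simp
    rw [show Complex.sin ((π:ℂ)*(b:ℂ)) = ((Real.sin (π*b):ℝ):ℂ) by
      rw [← Complex.ofReal_mul, ← Complex.ofReal_sin]]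
    linear_combination (-((Real.sin (π*b) : ℝ):ℂ) * (b:ℂ)) * hw
  have hfin := heval2.mul_left (π / Real.sin (π*b))
  have h1 : ∀ n : ℤ, (π/Real.sin (π*b)) * (Real.sin (π*b)*b/(π*(b^2-(n:ℝ)^2))) = b/(b^2-(n:ℝ)^2) := by
    intro n
    field_simp [hπ.ne', hsinpos.ne', den_ne hb0 hb1 n]
  have h2 : (π/Real.sin (π*b)) * Real.cos (b*π) = π * Real.cos (π*b) / Real.sin (π*b) := by
    rw [mul_comm b π]; ring
  simpa only [h1, h2] using hfin

set_option maxHeartbeats 1000000 in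
lemma cot_pair_hasSum {b : ℝ} (hb0 : 0 < b) (hb1 : b < 1/2) :
    HasSum (fun k : ℕ => 1/((k:ℝ)+b) - 1/((k:ℝ)+1-b))
      (π * Real.cos (π*b) / Real.sin (π*b)) := by
  set L := π * Real.cos (π*b) / Real.sin (π*b) with hL
  have hb0' : b ≠ 0 := hb0.ne'
  have hZ := cot_int_hasSum hb0 hb1
  have hP1 : HasSum (fun k : ℕ => 2*b/(b^2-((k:ℝ))^2)) (L + 1/b) := by
    have h0 := hZ.nat_add_neg
    have he : ∀ k : ℕ, b / (b^2 - ((k:ℤ):ℝ)^2) + b / (b^2 - (((-k:ℤ)):ℝ)^2)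
        = 2*b/(b^2-((k:ℝ))^2) := by
      intro k; push_cast; ring
    have hv : L + b / (b^2 - ((0:ℤ):ℝ)^2) = L + 1/b := by
      norm_num
      rw [pow_two]
      field_simp
    rw [funext he, hv] at h0
    exact h0
  have hsum1 : ∑ i ∈ Finset.range 1, 2*b/(b^2-((i:ℝ))^2) = 2/b := by
    simp only [Finset.sum_range_one, Nat.cast_zero]
    rw [show (0:ℝ)^2 = 0 by ring, sub_zero, pow_two]
    field_simp
  have hP1' : HasSum (fun k : ℕ => 2*b/(b^2-((k:ℝ))^2))
      ((L - 1/b) + ∑ i ∈ Finset.range 1, 2*b/(b^2-((i:ℝ))^2)) := by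
    rw [hsum1]
    convert hP1 using 1
    ring
  have hP2' := (hasSum_nat_add_iff 1).mpr hP1'
  have hP2 : HasSum (fun k : ℕ => 2*b/(b^2-(((k:ℝ))+1)^2)) (L - 1/b) := by
    convert hP2' using 2 with k
    · rfl
    push_cast
    ring_nf
  -- telescoping
  have hQ : HasSum (fun k : ℕ => 1/((k:ℝ)+1-b) - 1/((k:ℝ)+2-b)) (1/(1-b)) := by
    have hpos : ∀ x : ℝ, 0 ≤ x → 0 < x + 1 - b := by intro x hx; linarith
    rw [hasSum_iff_tendsto_nat_of_nonneg]
    · have hsum : ∀ n : ℕ, ∑ i ∈ Finset.range n, (1/((i:ℝ)+1-b) - 1/((i:ℝ)+2-b))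
          = 1/(1-b) - 1/((n:ℝ)+1-b) := by
        intro n
        induction n with
        | zero => simp
        | succ m ih =>
          rw [Finset.sum_range_succ, ih]
          push_cast
          ring
      simp only [hsum]
      have h1 : Tendsto (fun n : ℕ => ((n:ℝ)+(1-b))) atTop atTop :=
        tendsto_atTop_add_const_right atTop (1-b) tendsto_natCast_atTop_atTop
      have h2 : Tendsto (fun n : ℕ => ((n:ℝ)+(1-b))⁻¹) atTop (𝓝 0) :=
        tendsto_inv_atTop_zero.comp h1
      have h3 : Tendsto (fun n : ℕ => 1/(1-b) - ((n:ℝ)+(1-b))⁻¹) atTop (𝓝 (1/(1-b) - 0)) :=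
        tendsto_const_nhds.sub h2
      rw [sub_zero] at h3
      convert h3 using 2 with n
      rw [one_div]
      congr 1
      ring
    · intro i
      have d1 : 0 < (i:ℝ)+1-b := hpos i (Nat.cast_nonneg i)
      have d2 : 0 < (i:ℝ)+2-b := by linarith
      rw [sub_nonneg, one_div, one_div]
      apply inv_anti₀ d1
      linarith
  -- combine
  have hPQ := hP2.add hQ
  have hfun : ∀ k : ℕ, 2*b/(b^2-(((k:ℝ))+1)^2) + (1/((k:ℝ)+1-b) - 1/((k:ℝ)+2-b))
      = 1/(((k:ℝ)+1)+b) - 1/(((k:ℝ)+1)+1-b) := by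
    intro k
    have d1 : ((k:ℝ))+1+b ≠ 0 := by positivity
    have d2 : ((k:ℝ))+1-b ≠ 0 := by nlinarith [Nat.cast_nonneg (α := ℝ) k]
    have d3 : ((k:ℝ))+2-b ≠ 0 := by nlinarith [Nat.cast_nonneg (α := ℝ) k]
    have hfactor : b^2-(((k:ℝ))+1)^2 = -((((k:ℝ))+1+b) * (((k:ℝ))+1-b)) := by ring
    have e1 : 2*b/(b^2-(((k:ℝ))+1)^2) = 1/(((k:ℝ))+1+b) - 1/(((k:ℝ))+1-b) := by
      rw [hfactor, div_neg, div_sub_div _ _ d1 d2, ← neg_div]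
      congr 1
      ring
    rw [e1]
    ring
  rw [funext hfun] at hPQ
  have hPQ' : HasSum (fun n : ℕ => 1/(((n+1:ℕ):ℝ)+b) - 1/(((n+1:ℕ):ℝ)+1-b))
      (L - 1/b + 1/(1-b)) := by
    convert hPQ using 2 with k
    push_cast
    ring_nf
  have hfinal := (hasSum_nat_add_iff (f := fun k : ℕ => 1/((k:ℝ)+b) - 1/((k:ℝ)+1-b)) 1).mp hPQ'
  convert hfinal using 1
  · rfl
  simp only [Finset.sum_range_one, Nat.cast_zero]
  ring

theorem alternating_series_strip_exit (a : ℝ) (ha : |a| < 1) :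
    Tendsto (fun N => ∑ j ∈ Finset.range N, (-1 : ℝ) ^ j / ((2 * (j : ℝ) + 1) - (-1) ^ j * a))
      atTop (𝓝 ((π / 4) * (1 + Real.tan (π * a / 4)) / (1 - Real.tan (π * a / 4)))) := by
  obtain ⟨ha1, ha2⟩ := abs_lt.mp ha
  have hπ : (0:ℝ) < π := Real.pi_pos
  set b : ℝ := (1-a)/4 with hbdef
  have hb0 : 0 < b := by rw [hbdef]; linarith
  have hb1 : b < 1/2 := by rw [hbdef]; linarith
  set L := π * Real.cos (π*b) / Real.sin (π*b) with hLdef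
  have hSk : Tendsto (fun K : ℕ => ∑ k ∈ Finset.range K, (1/((k:ℝ)+b) - 1/((k:ℝ)+1-b)))
      atTop (𝓝 L) := (cot_pair_hasSum hb0 hb1).tendsto_sum_nat
  -- even partial sums
  have heven : ∀ K : ℕ, ∑ j ∈ Finset.range (2*K), ((-1:ℝ)^j / ((2*(j:ℝ)+1) - (-1)^j * a))
      = (1/4) * ∑ k ∈ Finset.range K, (1/((k:ℝ)+b) - 1/((k:ℝ)+1-b)) := by
    intro K
    induction K with
    | zero => simp
    | succ m ih =>
      rw [show 2*(m+1) = (2*m)+1+1 by ring, Finset.sum_range_succ, Finset.sum_range_succ, ih,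
        Finset.sum_range_succ]
      have hm0 : (0:ℝ) ≤ (m:ℝ) := Nat.cast_nonneg m
      have hp1 : ((-1:ℝ))^(2*m) = 1 := by rw [pow_mul]; norm_num
      have hp2 : ((-1:ℝ))^(2*m+1) = -1 := by rw [pow_succ, hp1]; norm_num
      rw [hp1, hp2]
      have hd1 : ((2*((2*m:ℕ):ℝ)+1) - 1 * a) ≠ 0 := by push_cast; nlinarith
      have hd2 : ((2*(((2*m+1):ℕ):ℝ)+1) - (-1) * a) ≠ 0 := by push_cast; nlinarith
      have hd3 : ((m:ℝ) + b) ≠ 0 := by rw [hbdef]; nlinarith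
      have hd4 : ((m:ℝ) + 1 - b) ≠ 0 := by rw [hbdef]; nlinarith
      generalize ∑ k ∈ Finset.range m, (1/((k:ℝ)+b) - 1/((k:ℝ)+1-b)) = S
      rw [hbdef] at *
      push_cast at *
      field_simp
      have key : (1 + (m:ℝ)*4 - a) * (1 + (m:ℝ)*4 - a)⁻¹ = 1 := mul_inv_cancel₀ (by nlinarith)
      linear_combination 4 * key
  -- composed limit
  have hcomp : Tendsto (fun N : ℕ =>
      (1/4) * ∑ k ∈ Finset.range ((N+1)/2), (1/((k:ℝ)+b) - 1/((k:ℝ)+1-b)))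
      atTop (𝓝 ((1/4) * L)) := by
    apply Tendsto.comp (hSk.const_mul (1/4))
    exact tendsto_atTop_atTop.mpr fun K => ⟨2*K, fun n hn => by omega⟩
  -- error bound
  have herr : ∀ N : ℕ,
      |(∑ j ∈ Finset.range N, ((-1:ℝ)^j / ((2*(j:ℝ)+1) - (-1)^j * a)))
        - (1/4) * ∑ k ∈ Finset.range ((N+1)/2), (1/((k:ℝ)+b) - 1/((k:ℝ)+1-b))| ≤ 1/((N:ℝ)+1) := by
    intro N
    rcases Nat.even_or_odd N with ⟨K, hK⟩ | ⟨K, hK⟩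
    · have hN : N = 2*K := by omega
      have hdiv : (N+1)/2 = K := by omega
      rw [hdiv, hN, heven K, sub_self, abs_zero]
      positivity
    · have hdiv : (N+1)/2 = K+1 := by omega
      have h1 := heven (K+1)
      rw [show 2*(K+1) = N + 1 by omega, Finset.sum_range_succ] at h1
      rw [hdiv, ← h1]
      rw [show ∀ x y : ℝ, x - (x + y) = -y from fun x y => by ring]
      have hNodd : ((-1:ℝ))^N = -1 := Odd.neg_one_pow ⟨K, hK⟩
      rw [hNodd]
      have hden : (0:ℝ) < 2*(N:ℝ)+1+a := by
        have : (0:ℝ) ≤ (N:ℝ) := Nat.cast_nonneg N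
        nlinarith
      rw [show (2*(N:ℝ)+1) - (-1) * a = 2*(N:ℝ)+1+a by ring]
      rw [neg_div, neg_neg, abs_of_pos (by positivity)]
      rw [one_div, one_div]
      apply inv_anti₀ (by positivity)
      have hN1 : (1:ℝ) ≤ (N:ℝ) := by
        have : 1 ≤ N := by omega
        exact_mod_cast this
      nlinarith
  -- error tends to zero
  have herr0 : Tendsto (fun N : ℕ =>
      (∑ j ∈ Finset.range N, ((-1:ℝ)^j / ((2*(j:ℝ)+1) - (-1)^j * a)))
        - (1/4) * ∑ k ∈ Finset.range ((N+1)/2), (1/((k:ℝ)+b) - 1/((k:ℝ)+1-b)))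
      atTop (𝓝 0) := by
    apply squeeze_zero_norm (fun n => herr n)
    exact tendsto_one_div_add_atTop_nhds_zero_nat
  have hmain : Tendsto (fun N : ℕ =>
      ∑ j ∈ Finset.range N, ((-1:ℝ)^j / ((2*(j:ℝ)+1) - (-1)^j * a)))
      atTop (𝓝 ((1/4) * L)) := by
    have := hcomp.add herr0
    rw [add_zero] at this
    convert this using 2 with N
    ring
  -- final algebra
  have hvalue : (1/4) * L = (π / 4) * (1 + Real.tan (π * a / 4)) / (1 - Real.tan (π * a / 4)) := by
    rw [hLdef, hbdef]
    have hc : 0 < Real.cos (π*a/4) := by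
      apply Real.cos_pos_of_mem_Ioo
      constructor <;> [nlinarith; nlinarith]
    have hsin2 : 0 < Real.sin (π*((1-a)/4)) := by
      apply Real.sin_pos_of_pos_of_lt_pi (by nlinarith) (by nlinarith)
    have h2 : Real.cos (π*((1-a)/4)) = (Real.sqrt 2/2) * (Real.cos (π*a/4) + Real.sin (π*a/4)) := by
      rw [show π*((1-a)/4) = π/4 - π*a/4 by ring, Real.cos_sub, Real.cos_pi_div_four,
        Real.sin_pi_div_four]
      ring
    have h3 : Real.sin (π*((1-a)/4)) = (Real.sqrt 2/2) * (Real.cos (π*a/4) - Real.sin (π*a/4)) := by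
      rw [show π*((1-a)/4) = π/4 - π*a/4 by ring, Real.sin_sub, Real.cos_pi_div_four,
        Real.sin_pi_div_four]
      ring
    have hsqrt2 : (0:ℝ) < Real.sqrt 2 := Real.sqrt_pos.mpr (by norm_num)
    have hcs : 0 < Real.cos (π*a/4) - Real.sin (π*a/4) := by
      rw [h3] at hsin2
      nlinarith
    rw [Real.tan_eq_sin_div_cos, h2, h3]
    rw [show (1:ℝ) - Real.sin (π*a/4)/Real.cos (π*a/4)
        = (Real.cos (π*a/4) - Real.sin (π*a/4))/Real.cos (π*a/4) by field_simp]
    rw [show (1:ℝ) + Real.sin (π*a/4)/Real.cos (π*a/4)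
        = (Real.cos (π*a/4) + Real.sin (π*a/4))/Real.cos (π*a/4) by field_simp]
    field_simp
  rw [← hvalue]
  exact hmain
end

section
/- The map z ↦ tan z sends the vertical strip {z ∈ ℂ : -π/4 < Re z < π/4} bijectively onto the open unit disk {|z| < 1}, and is holomorphic there. -/
open Complex Real

private lemma normSq_sin_cos (z : ℂ) :
    Complex.normSq (Complex.sin z) = Real.sin z.re ^ 2 + Real.sinh z.im ^ 2 ∧
    Complex.normSq (Complex.cos z) = Real.cos z.re ^ 2 + Real.sinh z.im ^ 2 := by
  have hs := Complex.sin_eq z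
  have hc := Complex.cos_eq z
  have h1 : Real.cosh z.im ^ 2 = 1 + Real.sinh z.im ^ 2 := by
    have := Real.cosh_sq z.im; nlinarith
  have h2 : Real.sin z.re ^ 2 + Real.cos z.re ^ 2 = 1 := Real.sin_sq_add_cos_sq z.re
  constructor
  · rw [hs]
    simp only [Complex.normSq_apply, Complex.add_re, Complex.add_im, Complex.mul_re,
      Complex.mul_im, Complex.I_re, Complex.I_im, Complex.ofReal_re, Complex.ofReal_im,
      ← Complex.ofReal_sin, ← Complex.ofReal_cos, ← Complex.ofReal_sinh, ← Complex.ofReal_cosh]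
    nlinarith
  · rw [hc]
    simp only [Complex.normSq_apply, Complex.sub_re, Complex.sub_im, Complex.mul_re,
      Complex.mul_im, Complex.I_re, Complex.I_im, Complex.ofReal_re, Complex.ofReal_im,
      ← Complex.ofReal_sin, ← Complex.ofReal_cos, ← Complex.ofReal_sinh, ← Complex.ofReal_cosh]
    nlinarith

private lemma cos_ne_zero_strip {z : ℂ} (h1 : -(π / 4) < z.re) (h2 : z.re < π / 4) :
    Complex.cos z ≠ 0 := by
  intro h
  have hsq := (normSq_sin_cos z).2
  rw [h, map_zero] at hsq
  have hcos : 0 < Real.cos z.re := by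
    apply Real.cos_pos_of_mem_Ioo
    constructor <;> [linarith [Real.pi_pos]; linarith [Real.pi_pos]]
  nlinarith

private lemma abs_tan_lt_one {z : ℂ} (h1 : -(π / 4) < z.re) (h2 : z.re < π / 4) :
    ‖Complex.tan z‖ < 1 := by
  have hc := cos_ne_zero_strip h1 h2
  have h2x : 0 < Real.cos (2 * z.re) := by
    apply Real.cos_pos_of_mem_Ioo
    constructor <;> [linarith; linarith]
  rw [Real.cos_two_mul'] at h2x
  have hs := (normSq_sin_cos z).1
  have hcq := (normSq_sin_cos z).2
  have hlt : Complex.normSq (Complex.sin z) < Complex.normSq (Complex.cos z) := by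
    rw [hs, hcq]; nlinarith
  have h1' : ‖Complex.sin z‖ < ‖Complex.cos z‖ := by
    have := Complex.sq_norm (Complex.sin z)
    have := Complex.sq_norm (Complex.cos z)
    nlinarith [norm_nonneg (Complex.sin z), norm_nonneg (Complex.cos z)]
  rw [Complex.tan_eq_sin_div_cos, norm_div, div_lt_one]
  · exact h1'
  · exact norm_pos_iff.mpr hc

private lemma re_arctan {w : ℂ} (hw : ‖w‖ < 1) :
    -(π / 4) < (Complex.arctan w).re ∧ (Complex.arctan w).re < π / 4 := by
  have hb : (1 : ℂ) - w * Complex.I ≠ 0 := by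
    intro h
    have : ‖w * Complex.I‖ = 1 := by
      have : w * Complex.I = 1 := by linear_combination -h
      rw [this, norm_one]
    rw [norm_mul, Complex.norm_I, mul_one] at this
    linarith
  set u : ℂ := (1 + w * Complex.I) / (1 - w * Complex.I) with hu
  have hure : 0 < u.re := by
    rw [hu, Complex.div_re, ← add_div]
    have hns : 0 < Complex.normSq (1 - w * Complex.I) := Complex.normSq_pos.mpr hb
    apply div_pos _ hns
    have h1 : Complex.normSq w < 1 := by
      have := Complex.sq_norm w
      nlinarith [norm_nonneg w]
    simp only [Complex.add_re, Complex.add_im, Complex.sub_re, Complex.sub_im,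
      Complex.one_re, Complex.one_im, Complex.mul_re, Complex.mul_im,
      Complex.I_re, Complex.I_im, Complex.normSq_apply] at h1 ⊢
    nlinarith
  have harg : |Complex.arg u| < π / 2 :=
    Complex.abs_arg_lt_pi_div_two_iff.mpr (Or.inl hure)
  have hre : (Complex.arctan w).re = Complex.arg u / 2 := by
    rw [Complex.arctan, Complex.mul_re]
    simp [Complex.log_im, Complex.div_re, Complex.div_im, Complex.normSq_apply]
    ring
  rw [hre]
  rw [abs_lt] at harg
  constructor <;> [linarith; linarith]

theorem tan_conformal_strip_to_disk :
    Set.BijOn Complex.tan {z : ℂ | -(π / 4) < z.re ∧ z.re < π / 4}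
      {z : ℂ | ‖z‖ < 1} ∧
    DifferentiableOn ℂ Complex.tan {z : ℂ | -(π / 4) < z.re ∧ z.re < π / 4} := by
  have pi_pos := Real.pi_pos
  constructor
  · refine ⟨fun z hz => abs_tan_lt_one hz.1 hz.2, ?_, ?_⟩
    · intro z hz w hw htan
      have hz' : Complex.arctan (Complex.tan z) = z := by
        apply Complex.arctan_tan
        · intro h
          have : z.re = π / 2 := by rw [h]; simp
          linarith [hz.2]
        · linarith [hz.1]
        · linarith [hz.2]
      have hw' : Complex.arctan (Complex.tan w) = w := by
        apply Complex.arctan_tan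
        · intro h
          have : w.re = π / 2 := by rw [h]; simp
          linarith [hw.2]
        · linarith [hw.1]
        · linarith [hw.2]
      rw [← hz', ← hw', htan]
    · intro w hw
      simp only [Set.mem_setOf_eq] at hw
      refine ⟨Complex.arctan w, ?_, ?_⟩
      · exact re_arctan hw
      · apply Complex.tan_arctan
        · intro h; rw [h] at hw; simp at hw
        · intro h; rw [h] at hw; simp at hw
  · intro z hz
    exact (Complex.differentiableAt_tan.mpr (cos_ne_zero_strip hz.1 hz.2)).differentiableWithinAt
end

section
/- For a fixed point a = x + iy with y > 0 in the upper half-plane and z in the upper half-plane, the integral ∫_0^∞ (1/(2πt))(e^{-|a-z|²/(2t)} - e^{-|a - conj(z)|²/(2t)}) dt equals (1/π)·ln(|a - conj(z)|/|a - z|). -/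
open Real Complex MeasureTheory Set

lemma frullani_exp {A B : ℝ} (hA : 0 < A) (hAB : A < B) :
    ∫ u in Ioi (0:ℝ), (Real.exp (-(A * u)) - Real.exp (-(B * u))) / u
      = Real.log (B / A) := by
  have hB : 0 < B := hA.trans hAB
  -- inner integral in s
  have key1 : ∀ u : ℝ, 0 < u →
      ∫ s in Ioc A B, Real.exp (-(s * u))
        = (Real.exp (-(A * u)) - Real.exp (-(B * u))) / u := by
    intro u hu
    rw [← intervalIntegral.integral_of_le hAB.le]
    have : ∫ s in A..B, Real.exp (-(s * u))
        = (fun s => -Real.exp (-(s * u)) / u) B - (fun s => -Real.exp (-(s * u)) / u) A := by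
      apply intervalIntegral.integral_eq_sub_of_hasDerivAt
      · intro s _
        have : HasDerivAt (fun s : ℝ => -(s * u)) (-u) s := by
          have h := ((hasDerivAt_id s).mul_const u).neg; rw [one_mul] at h; exact h
        have h2 := (this.exp.div_const u).neg
        convert h2 using 1
        · funext x; simp only [Pi.neg_apply]; ring
        rw [mul_neg, neg_div, neg_neg, mul_div_assoc, div_self hu.ne', mul_one]
      · apply Continuous.intervalIntegrable
        continuity
    rw [this]
    field_simp
    ring
  -- inner integral in u
  have key2 : ∀ s : ℝ, 0 < s →
      ∫ u in Ioi (0:ℝ), Real.exp (-(s * u)) = s⁻¹ := by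
    intro s hs
    have := integral_comp_mul_left_Ioi (fun x => Real.exp (-x)) 0 hs
    simp only [mul_zero] at this
    rw [this, integral_exp_neg_Ioi_zero, smul_eq_mul, mul_one]
  -- bound and integrability of the Frullani integrand
  have bound : ∀ u : ℝ, 0 < u →
      0 ≤ (Real.exp (-(A * u)) - Real.exp (-(B * u))) / u ∧
      (Real.exp (-(A * u)) - Real.exp (-(B * u))) / u ≤ (B - A) * Real.exp (-(A * u)) := by
    intro u hu
    have h1 : Real.exp (-(B * u)) ≤ Real.exp (-(A * u)) :=
      Real.exp_le_exp.2 (by nlinarith)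
    constructor
    · exact div_nonneg (by linarith) hu.le
    · rw [div_le_iff₀ hu]
      have h2 : Real.exp (-(B * u)) = Real.exp (-(A * u)) * Real.exp (-((B - A) * u)) := by
        rw [← Real.exp_add]; ring_nf
      have h3 : 1 - (B - A) * u ≤ Real.exp (-((B - A) * u)) := by
        have := Real.add_one_le_exp (-((B - A) * u))
        linarith
      have h4 : 0 < Real.exp (-(A * u)) := Real.exp_pos _
      nlinarith
  have g_int : IntegrableOn
      (fun u => (Real.exp (-(A * u)) - Real.exp (-(B * u))) / u) (Ioi (0:ℝ)) := by
    apply Integrable.mono ((exp_neg_integrableOn_Ioi 0 hA).const_mul (B - A))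
    · apply Measurable.aestronglyMeasurable
      exact (((measurable_id.const_mul A).neg.exp.sub
        (measurable_id.const_mul B).neg.exp).div measurable_id)
    · filter_upwards [ae_restrict_mem measurableSet_Ioi] with u hu
      have h := bound u hu
      rw [Real.norm_eq_abs, Real.norm_eq_abs, _root_.abs_of_nonneg h.1]
      have : (0:ℝ) ≤ (B - A) * Real.exp (-A * u) :=
        mul_nonneg (by linarith) (Real.exp_pos _).le
      rw [_root_.abs_of_nonneg this]
      rw [neg_mul]
      exact h.2
  -- Fubini
  set F : ℝ → ℝ → ℝ := fun u s => Real.exp (-(s * u)) with hF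
  have hFmeas : AEStronglyMeasurable (Function.uncurry F)
      ((volume.restrict (Ioi (0:ℝ))).prod (volume.restrict (Ioc A B))) := by
    apply Continuous.aestronglyMeasurable
    apply Real.continuous_exp.comp
    continuity
  have hFint : Integrable (Function.uncurry F)
      ((volume.restrict (Ioi (0:ℝ))).prod (volume.restrict (Ioc A B))) := by
    rw [MeasureTheory.integrable_prod_iff hFmeas]
    constructor
    · filter_upwards with u
      apply Continuous.integrableOn_Ioc
      continuity
    · apply Integrable.congr g_int
      filter_upwards [ae_restrict_mem measurableSet_Ioi] with u hu
      rw [← key1 u hu]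
      apply setIntegral_congr_fun measurableSet_Ioc
      intro s _
      simp [F, Function.uncurry, abs_of_pos (Real.exp_pos _)]
  have swap := MeasureTheory.integral_integral_swap hFint
  calc ∫ u in Ioi (0:ℝ), (Real.exp (-(A * u)) - Real.exp (-(B * u))) / u
      = ∫ u in Ioi (0:ℝ), ∫ s in Ioc A B, F u s := by
        apply setIntegral_congr_fun measurableSet_Ioi
        intro u hu
        exact (key1 u hu).symm
    _ = ∫ s in Ioc A B, ∫ u in Ioi (0:ℝ), F u s := swap
    _ = ∫ s in Ioc A B, s⁻¹ := by
        apply setIntegral_congr_fun measurableSet_Ioc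
        intro s hs
        exact key2 s (hA.trans_le hs.1.le)
    _ = Real.log (B / A) := by
        rw [← intervalIntegral.integral_of_le hAB.le]
        exact integral_inv_of_pos hA hB

theorem greens_function_half_plane (a z : ℂ) (ha : 0 < a.im) (hz : 0 < z.im) (hne : a ≠ z) :
    ∫ t in Set.Ioi (0 : ℝ),
        (1 / (2 * π * t)) *
          (Real.exp (-(‖a - z‖) ^ 2 / (2 * t)) -
            Real.exp (-(‖a - (starRingEnd ℂ) z‖) ^ 2 / (2 * t)))
      = (1 / π) * Real.log (‖a - (starRingEnd ℂ) z‖ / ‖a - z‖) := by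
  set A := ‖a - z‖ with hAdef
  set B := ‖a - (starRingEnd ℂ) z‖ with hBdef
  have hA0 : 0 < A := by
    rw [hAdef]
    exact norm_pos_iff.mpr (sub_ne_zero.mpr hne)
  have hB0 : 0 ≤ B := norm_nonneg _
  have hsq : A ^ 2 < B ^ 2 := by
    rw [hAdef, hBdef, Complex.sq_norm, Complex.sq_norm]
    simp only [Complex.normSq_apply, Complex.sub_re, Complex.sub_im, Complex.conj_re,
      Complex.conj_im]
    nlinarith
  have hAB : A < B := by nlinarith
  have hfr := frullani_exp (A := A ^ 2 / 2) (B := B ^ 2 / 2) (by positivity) (by linarith)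
  have hsub := integral_comp_rpow_Ioi
    (fun y => ((Real.exp (-(A ^ 2 / 2 * y)) - Real.exp (-(B ^ 2 / 2 * y))) / y) * (1 / (2 * π)))
    (p := -1) (by norm_num)
  have hL : ∫ t in Set.Ioi (0 : ℝ),
      (1 / (2 * π * t)) *
        (Real.exp (-A ^ 2 / (2 * t)) - Real.exp (-B ^ 2 / (2 * t)))
      = ∫ y in Set.Ioi (0:ℝ),
        ((Real.exp (-(A ^ 2 / 2 * y)) - Real.exp (-(B ^ 2 / 2 * y))) / y) * (1 / (2 * π)) := by
    rw [← hsub]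
    apply setIntegral_congr_fun measurableSet_Ioi
    intro x hx
    have hx0 : (0:ℝ) < x := hx
    have e1 : x ^ ((-1:ℝ) - 1) = (x ^ 2)⁻¹ := by
      rw [show ((-1:ℝ) - 1) = ((-2 : ℤ) : ℝ) by norm_num, Real.rpow_intCast, zpow_neg]
      norm_num [zpow_two, sq]
    have e2 : x ^ (-1:ℝ) = x⁻¹ := Real.rpow_neg_one x
    have e3 : -A ^ 2 / (2 * x) = -(A ^ 2 / 2 * x⁻¹) := by field_simp
    have e4 : -B ^ 2 / (2 * x) = -(B ^ 2 / 2 * x⁻¹) := by field_simp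
    simp only [e1, e2, e3, e4, smul_eq_mul]
    have hπ : (π : ℝ) ≠ 0 := Real.pi_ne_zero
    field_simp
    ring
  rw [hL, MeasureTheory.integral_mul_const, hfr]
  have h5 : B ^ 2 / 2 / (A ^ 2 / 2) = (B / A) ^ 2 := by
    field_simp
  rw [h5, show (B / A) ^ 2 = (B / A) ^ (2:ℕ) by norm_num, Real.log_pow]
  have hπ : (π : ℝ) ≠ 0 := Real.pi_ne_zero
  push_cast
  field_simp
end
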